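/- (Strauss radial lemma) Let N ≥ 3. There is a constant C > 0 such that for every radial function f ∈ H¹(ℝ^N) and every x with |x| ≥ 1, |f(x)| ≤ C |x|^{−(N−1)/2} ‖f‖_{L^2}^{1/2} ‖∇f‖_{L^2}^{1/2}. -/

import Mathlib

open Set MeasureTheory Metric
open scoped ENNReal

local notation "dim" => Module.finrank ℝ

section Polar
variable {E : Type*} [NormedAddCommGroup E] [NormedSpace ℝ E] [MeasurableSpace E] [BorelSpace E]
  [Nontrivial E] [FiniteDimensional ℝ E] (μ : Measure E) [μ.IsAddHaarMeasure]

lemma lintegral_fun_norm_addHaar' (h : ℝ → ℝ≥0∞) (hh : Measurable h) :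
    ∫⁻ x, h ‖x‖ ∂μ
      = μ.toSphere univ * ∫⁻ y in Ioi (0:ℝ), ENNReal.ofReal (y ^ (dim E - 1)) * h y := by
  have hmeas : Measurable fun p : sphere (0:E) 1 × Ioi (0:ℝ) => h ↑p.2 :=
    hh.comp (measurable_subtype_coe.comp measurable_snd)
  calc
    ∫⁻ x, h ‖x‖ ∂μ = ∫⁻ x : ({(0:E)}ᶜ : Set E), h ‖(x:E)‖ ∂(μ.comap (↑)) := by
      rw [lintegral_subtype_comap (measurableSet_singleton _).compl fun x => h ‖x‖,
        restrict_compl_singleton]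
    _ = ∫⁻ p : sphere (0:E) 1 × Ioi (0:ℝ), h p.2
        ∂(μ.toSphere.prod (.volumeIoiPow (dim E - 1))) := by
      rw [← μ.measurePreserving_homeomorphUnitSphereProd.lintegral_comp
        (f := fun p => h ↑p.2) hmeas]
      simp
    _ = μ.toSphere univ * ∫⁻ y : Ioi (0:ℝ), h y ∂(.volumeIoiPow (dim E - 1)) := by
      rw [MeasureTheory.lintegral_prod _ hmeas.aemeasurable]
      simp [lintegral_const, mul_comm]
    _ = _ := by
      congr 1
      rw [Measure.volumeIoiPow, lintegral_withDensity_eq_lintegral_mul _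
        (by exact (measurable_subtype_coe.pow_const _).ennreal_ofReal)
        (by exact hh.comp measurable_subtype_coe : Measurable fun y : Ioi (0:ℝ) => h ↑y)]
      simp only [Pi.mul_apply]
      rw [lintegral_subtype_comap measurableSet_Ioi (fun y => ENNReal.ofReal (y ^ (dim E - 1)) * h y)]
end Polar

lemma radial_fderiv_norm {E : Type*} [NormedAddCommGroup E] [InnerProductSpace ℝ E]
    [FiniteDimensional ℝ E] (f : E → ℝ) (hf : Differentiable ℝ f) (g : ℝ → ℝ)
    (hg : ∀ x, f x = g ‖x‖) {x y : E} (hxy : ‖x‖ = ‖y‖) :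
    ‖fderiv ℝ f x‖ = ‖fderiv ℝ f y‖ := by
  set T : E ≃ₗᵢ[ℝ] E := Submodule.reflection (ℝ ∙ (x - y))ᗮ with hT
  have hTx : T x = y := Submodule.reflection_sub hxy
  have hfT : f ∘ T.toLinearIsometry.toContinuousLinearMap = f := by
    funext z
    simp only [Function.comp_apply, hg, ContinuousLinearMap.coe_coe,
      LinearIsometry.coe_toContinuousLinearMap, LinearIsometryEquiv.coe_toLinearIsometry]
    rw [T.norm_map]
  have h1 : HasFDerivAt (f ∘ T.toLinearIsometry.toContinuousLinearMap)
      ((fderiv ℝ f (T x)).comp T.toLinearIsometry.toContinuousLinearMap) x :=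
    (hf (T x)).hasFDerivAt.comp x T.toLinearIsometry.toContinuousLinearMap.hasFDerivAt
  rw [hfT] at h1
  rw [h1.fderiv, hTx]
  exact ContinuousLinearMap.opNorm_comp_linearIsometryEquiv _ T

open MeasureTheory

set_option maxHeartbeats 2000000 in
theorem stmt4 (N : ℕ) (hN : 3 ≤ N) :
    ∃ C > 0, ∀ f : EuclideanSpace ℝ (Fin N) → ℝ,
      Continuous f → Differentiable ℝ f →
      (∃ g : ℝ → ℝ, ∀ x, f x = g ‖x‖) →
      Integrable (fun x => f x ^ 2) →
      Integrable (fun x => ‖fderiv ℝ f x‖ ^ 2) →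
      ∀ x : EuclideanSpace ℝ (Fin N), 1 ≤ ‖x‖ →
        |f x| ≤ C * ‖x‖ ^ (-(((N:ℝ) - 1)/2)) *
          (∫ y, f y ^ 2) ^ ((1:ℝ)/4) * (∫ y, ‖fderiv ℝ f y‖ ^ 2) ^ ((1:ℝ)/4) := by
  classical
  haveI : Nonempty (Fin N) := ⟨⟨0, by omega⟩⟩
  set e₀ : EuclideanSpace ℝ (Fin N) := EuclideanSpace.single (⟨0, by omega⟩ : Fin N) (1:ℝ) with he₀
  have h0e : ‖e₀‖ = 1 := by rw [he₀, EuclideanSpace.norm_single, norm_one]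
  haveI : Nontrivial (EuclideanSpace ℝ (Fin N)) := ⟨⟨0, e₀, by
    intro h; apply one_ne_zero (α := ℝ); rw [← h0e, ← h, norm_zero]⟩⟩
  have hdim : dim (EuclideanSpace ℝ (Fin N)) = N := finrank_euclideanSpace_fin
  set c : ℝ≥0∞ := (volume : Measure (EuclideanSpace ℝ (Fin N))).toSphere univ with hc
  have hc0 : c ≠ 0 := by
    rw [hc, Measure.toSphere_apply_univ, hdim]
    exact mul_ne_zero (by simp; omega) (measure_ball_pos _ _ one_pos).ne'
  have hctop : c ≠ ∞ := by
    rw [hc, Measure.toSphere_apply_univ]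
    exact ENNReal.mul_ne_top (ENNReal.natCast_ne_top _) measure_ball_lt_top.ne
  set cR : ℝ := c.toReal with hcR
  have hcR0 : 0 < cR := ENNReal.toReal_pos hc0 hctop
  refine ⟨Real.sqrt (2 / cR), Real.sqrt_pos.2 (by positivity), ?_⟩
  intro f hfc hfd hrad hI1 hI2 x hx
  obtain ⟨g, hg⟩ := hrad
  set u : ℝ → ℝ := fun r => f (r • e₀) with hu
  have hnorm_smul : ∀ r : ℝ, 0 ≤ r → ‖r • e₀‖ = r := by
    intro r hr; rw [norm_smul, h0e, mul_one, Real.norm_eq_abs, abs_of_nonneg hr]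
  have hfu : ∀ z : EuclideanSpace ℝ (Fin N), f z = u ‖z‖ := by
    intro z
    rw [hu]; simp only
    rw [hg, hg, hnorm_smul _ (norm_nonneg z)]
  have hu_cont : Continuous u := hfc.comp (continuous_id.smul continuous_const)
  set D : ℝ → ℝ := fun r => fderiv ℝ f (r • e₀) e₀ with hD
  have hu_deriv : ∀ r : ℝ, HasDerivAt u (D r) r := by
    intro r
    have h1 : HasDerivAt (fun s : ℝ => s • e₀) ((1:ℝ) • e₀) r := (hasDerivAt_id r).smul_const e₀
    rw [one_smul] at h1
    exact (hfd (r • e₀)).hasFDerivAt.comp_hasDerivAt r h1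
  have hD_meas : Measurable D := by
    have : D = deriv u := by funext r; exact ((hu_deriv r).deriv).symm
    rw [this]; exact measurable_deriv u
  set G : ℝ → ℝ := fun r => ‖fderiv ℝ f (r • e₀)‖ with hG
  have hG_meas : Measurable G :=
    ((measurable_fderiv ℝ f).comp ((continuous_id.smul continuous_const).measurable)).norm
  have hG_nonneg : ∀ r, 0 ≤ G r := fun r => norm_nonneg _
  have hG_rad : ∀ z : EuclideanSpace ℝ (Fin N), ‖fderiv ℝ f z‖ = G ‖z‖ := by
    intro z
    exact radial_fderiv_norm f hfd g hg (by rw [hnorm_smul _ (norm_nonneg z)])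
  have hDG : ∀ r, |D r| ≤ G r := by
    intro r
    calc |D r| = ‖fderiv ℝ f (r • e₀) e₀‖ := rfl
      _ ≤ ‖fderiv ℝ f (r • e₀)‖ * ‖e₀‖ := ContinuousLinearMap.le_opNorm _ _
      _ = G r := by rw [h0e, mul_one]
  -- nonnegativity of the integrals
  have hI1nn : 0 ≤ ∫ y, f y ^ 2 := integral_nonneg fun y => sq_nonneg _
  have hI2nn : 0 ≤ ∫ y, ‖fderiv ℝ f y‖ ^ 2 := integral_nonneg fun y => sq_nonneg _
  -- polar coordinates
  have hpolar1 : ENNReal.ofReal (∫ y, f y ^ 2)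
      = c * ∫⁻ y in Ioi (0:ℝ), ENNReal.ofReal (y ^ (N - 1)) * ENNReal.ofReal (u y ^ 2) := by
    rw [MeasureTheory.ofReal_integral_eq_lintegral_ofReal hI1
      (ae_of_all _ fun y => sq_nonneg _)]
    have heq : (fun z : EuclideanSpace ℝ (Fin N) => ENNReal.ofReal (f z ^ 2))
        = fun z : EuclideanSpace ℝ (Fin N) => ENNReal.ofReal (u ‖z‖ ^ 2) := by
      funext z; rw [hfu z]
    rw [heq, lintegral_fun_norm_addHaar' (volume : Measure (EuclideanSpace ℝ (Fin N)))
      (fun y => ENNReal.ofReal (u y ^ 2)) ((hu_cont.measurable.pow_const 2).ennreal_ofReal),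
      hdim]
  have hpolar2 : ENNReal.ofReal (∫ y, ‖fderiv ℝ f y‖ ^ 2)
      = c * ∫⁻ y in Ioi (0:ℝ), ENNReal.ofReal (y ^ (N - 1)) * ENNReal.ofReal (G y ^ 2) := by
    rw [MeasureTheory.ofReal_integral_eq_lintegral_ofReal hI2
      (ae_of_all _ fun y => sq_nonneg _)]
    have heq : (fun z : EuclideanSpace ℝ (Fin N) => ENNReal.ofReal (‖fderiv ℝ f z‖ ^ 2))
        = fun z : EuclideanSpace ℝ (Fin N) => ENNReal.ofReal (G ‖z‖ ^ 2) := by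
      funext z; rw [hG_rad z]
    rw [heq, lintegral_fun_norm_addHaar' (volume : Measure (EuclideanSpace ℝ (Fin N)))
      (fun y => ENNReal.ofReal (G y ^ 2)) ((hG_meas.pow_const 2).ennreal_ofReal),
      hdim]
  set A : ℝ≥0∞ := ∫⁻ y in Ioi (1:ℝ), ENNReal.ofReal (y ^ (N - 1) * u y ^ 2) with hA
  set B : ℝ≥0∞ := ∫⁻ y in Ioi (1:ℝ), ENNReal.ofReal (y ^ (N - 1) * G y ^ 2) with hB
  have hsplit : ∀ (v : ℝ → ℝ), ∀ᵐ y ∂(volume.restrict (Ioi (1:ℝ))),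
      ENNReal.ofReal (y ^ (N-1) * v y) = ENNReal.ofReal (y ^ (N-1)) * ENNReal.ofReal (v y) := by
    intro v
    filter_upwards [ae_restrict_mem measurableSet_Ioi] with y hy
    exact ENNReal.ofReal_mul (pow_nonneg (by linarith [mem_Ioi.1 hy]) _)
  have hAle : c * A ≤ ENNReal.ofReal (∫ y, f y ^ 2) := by
    rw [hpolar1, hA]
    refine mul_le_mul_right ?_ c
    rw [lintegral_congr_ae (hsplit (fun y => u y ^ 2))]
    exact lintegral_mono_set fun y hy => lt_trans one_pos (mem_Ioi.1 hy)
  have hBle : c * B ≤ ENNReal.ofReal (∫ y, ‖fderiv ℝ f y‖ ^ 2) := by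
    rw [hpolar2, hB]
    refine mul_le_mul_right ?_ c
    rw [lintegral_congr_ae (hsplit (fun y => G y ^ 2))]
    exact lintegral_mono_set fun y hy => lt_trans one_pos (mem_Ioi.1 hy)
  have hAtop : A ≠ ∞ := by
    intro h
    rw [h] at hAle
    rw [ENNReal.mul_top hc0] at hAle
    exact (ENNReal.ofReal_lt_top.trans_le hAle).false
  have hBtop : B ≠ ∞ := by
    intro h
    rw [h] at hBle
    rw [ENNReal.mul_top hc0] at hBle
    exact (ENNReal.ofReal_lt_top.trans_le hBle).false
  -- Cauchy-Schwarz
  set P : ℝ≥0∞ := ∫⁻ y in Ioi (1:ℝ), ENNReal.ofReal (y ^ (N - 1) * (|u y| * G y)) with hP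
  have hCS : P ≤ A ^ (1/2 : ℝ) * B ^ (1/2 : ℝ) := by
    set a : ℝ → ℝ≥0∞ := fun y => ENNReal.ofReal (Real.sqrt (y ^ (N-1)) * |u y|) with ha
    set b : ℝ → ℝ≥0∞ := fun y => ENNReal.ofReal (Real.sqrt (y ^ (N-1)) * G y) with hb
    have ha_meas : AEMeasurable a (volume.restrict (Ioi (1:ℝ))) :=
      (((measurable_id.pow_const (N-1)).sqrt.mul hu_cont.measurable.abs).ennreal_ofReal).aemeasurable
    have hb_meas : AEMeasurable b (volume.restrict (Ioi (1:ℝ))) :=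
      (((measurable_id.pow_const (N-1)).sqrt.mul hG_meas).ennreal_ofReal).aemeasurable
    have hsq : ∀ t : ℝ, 0 ≤ t → (ENNReal.ofReal t) ^ (2:ℝ) = ENNReal.ofReal (t ^ 2) := by
      intro t ht
      rw [show (2:ℝ) = ((2:ℕ):ℝ) by norm_num, ENNReal.rpow_natCast, ← ENNReal.ofReal_pow ht]
    have hP' : P = ∫⁻ y in Ioi (1:ℝ), (a * b) y := by
      rw [hP]
      refine lintegral_congr_ae ?_
      filter_upwards [ae_restrict_mem measurableSet_Ioi] with y hy
      have hy0 : (0:ℝ) ≤ y := by linarith [mem_Ioi.1 hy]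
      have hq : (0:ℝ) ≤ y ^ (N-1) := pow_nonneg hy0 _
      simp only [ha, hb, Pi.mul_apply]
      rw [← ENNReal.ofReal_mul (by positivity)]
      congr 1
      rw [show Real.sqrt (y^(N-1)) * |u y| * (Real.sqrt (y^(N-1)) * G y)
        = (Real.sqrt (y^(N-1)) * Real.sqrt (y^(N-1))) * (|u y| * G y) by ring,
        Real.mul_self_sqrt hq]
    have hA' : (∫⁻ y in Ioi (1:ℝ), a y ^ (2:ℝ)) = A := by
      rw [hA]
      refine lintegral_congr_ae ?_
      filter_upwards [ae_restrict_mem measurableSet_Ioi] with y hy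
      have hy0 : (0:ℝ) ≤ y := by linarith [mem_Ioi.1 hy]
      have hq : (0:ℝ) ≤ y ^ (N-1) := pow_nonneg hy0 _
      rw [ha]
      simp only
      rw [hsq _ (by positivity), mul_pow, Real.sq_sqrt hq, sq_abs]
    have hB' : (∫⁻ y in Ioi (1:ℝ), b y ^ (2:ℝ)) = B := by
      rw [hB]
      refine lintegral_congr_ae ?_
      filter_upwards [ae_restrict_mem measurableSet_Ioi] with y hy
      have hy0 : (0:ℝ) ≤ y := by linarith [mem_Ioi.1 hy]
      have hq : (0:ℝ) ≤ y ^ (N-1) := pow_nonneg hy0 _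
      rw [hb]
      simp only
      rw [hsq _ (by positivity), mul_pow, Real.sq_sqrt hq]
    calc P = ∫⁻ y in Ioi (1:ℝ), (a * b) y := hP'
      _ ≤ (∫⁻ y in Ioi (1:ℝ), a y ^ (2:ℝ)) ^ (1/(2:ℝ)) *
          (∫⁻ y in Ioi (1:ℝ), b y ^ (2:ℝ)) ^ (1/(2:ℝ)) :=
        ENNReal.lintegral_mul_le_Lp_mul_Lq _ Real.HolderConjugate.two_two
          ha_meas hb_meas
      _ = A ^ (1/2:ℝ) * B ^ (1/2:ℝ) := by rw [hA', hB']
  have hPtop : P ≠ ∞ := by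
    intro h
    rw [h] at hCS
    exact (ENNReal.mul_lt_top (ENNReal.rpow_lt_top_of_nonneg (by norm_num) hAtop)
      (ENNReal.rpow_lt_top_of_nonneg (by norm_num) hBtop)).ne.symm (top_le_iff.1 hCS).symm
  -- the main pointwise estimate
  set r : ℝ := ‖x‖ with hr
  have hr1 : 1 ≤ r := hx
  have hsmall : ∀ ε : ℝ, 0 < ε → ∃ b, r ≤ b ∧ b ^ (N-1) * u b ^ 2 ≤ ε := by
    intro ε hε
    by_contra hcon
    push_neg at hcon
    apply hAtop
    have h1 : ∫⁻ y in Ioi r, ENNReal.ofReal ε ∂volume ≤ A := by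
      rw [hA]
      refine le_trans ?_ (lintegral_mono_set (fun y hy =>
        mem_Ioi.2 (lt_of_le_of_lt hr1 (mem_Ioi.1 hy))))
      refine lintegral_mono_ae ?_
      filter_upwards [ae_restrict_mem measurableSet_Ioi] with y hy
      exact ENNReal.ofReal_le_ofReal (hcon y (le_of_lt (mem_Ioi.1 hy))).le
    rw [setLIntegral_const, Real.volume_Ioi, ENNReal.mul_top
      (by simpa [ENNReal.ofReal_eq_zero] using hε)] at h1
    exact top_le_iff.1 h1
  have hmain : ENNReal.ofReal (r ^ (N - 1) * u r ^ 2) ≤ 2 * P := by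
    refine ENNReal.le_of_forall_pos_le_add ?_
    intro ε hε _
    obtain ⟨b, hrb, hφb⟩ := hsmall ε (by exact_mod_cast hε)
    have hr0 : (0:ℝ) < r := lt_of_lt_of_le one_pos hr1
    set ψ₁ : ℝ → ℝ := fun s => ((N-1:ℕ):ℝ) * s ^ (N-2) * u s ^ 2 with hψ₁
    set ψ₂ : ℝ → ℝ := fun s => s ^ (N-1) * (2 * u s * D s) with hψ₂
    have hφd : ∀ s : ℝ, HasDerivAt (fun t => t ^ (N-1) * u t ^ 2) (ψ₁ s + ψ₂ s) s := by
      intro s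
      have h1 : HasDerivAt (fun t : ℝ => t ^ (N-1)) (((N-1:ℕ):ℝ) * s ^ (N-1-1)) s :=
        hasDerivAt_pow (N-1) s
      have h2 : HasDerivAt (fun t => u t ^ 2) (((2:ℕ):ℝ) * u s ^ (2-1) * D s) s :=
        (hu_deriv s).pow 2
      have h3 := h1.mul h2
      refine h3.congr_deriv ?_
      have hexp : N - 1 - 1 = N - 2 := by omega
      rw [hψ₁, hψ₂, hexp]
      push_cast
      ring
    have hsub : Ioc r b ⊆ Ioi (1:ℝ) := fun y hy => lt_of_le_of_lt hr1 hy.1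
    have hGsqInt : IntegrableOn (fun y => y ^ (N-1) * G y ^ 2) (Ioi (1:ℝ)) := by
      constructor
      · exact ((measurable_id.pow_const (N-1)).mul (hG_meas.pow_const 2)).aestronglyMeasurable
      · rw [hasFiniteIntegral_iff_ofReal ?_]
        · exact Ne.lt_top hBtop
        · filter_upwards [ae_restrict_mem measurableSet_Ioi] with y hy
          have : (0:ℝ) ≤ y := by linarith [mem_Ioi.1 hy]
          positivity
    have hGsq_Ioc : IntegrableOn (fun y => y ^ (N-1) * G y ^ 2) (Ioc r b) :=
      hGsqInt.mono_set hsub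
    have hG2_Ioc : IntegrableOn (fun y => G y ^ 2) (Ioc r b) := by
      refine Integrable.mono' hGsq_Ioc (hG_meas.pow_const 2).aestronglyMeasurable ?_
      filter_upwards [ae_restrict_mem measurableSet_Ioc] with y hy
      have hy1 : (1:ℝ) ≤ y := le_of_lt (hsub hy)
      rw [Real.norm_eq_abs, abs_of_nonneg (sq_nonneg _)]
      nlinarith [sq_nonneg (G y), one_le_pow₀ hy1 (n := N-1)]
    have hG_Ioc : IntegrableOn G (Ioc r b) := by
      haveI : IsFiniteMeasure (volume.restrict (Ioc r b)) :=
        ⟨by rw [Measure.restrict_apply_univ]; exact measure_Ioc_lt_top⟩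
      have hsum : IntegrableOn (fun y => 1 + G y ^ 2) (Ioc r b) :=
        integrable_const_add_iff.2 hG2_Ioc
      refine Integrable.mono' hsum hG_meas.aestronglyMeasurable ?_
      refine ae_of_all _ fun y => ?_
      rw [Real.norm_eq_abs, abs_of_nonneg (hG_nonneg y)]
      nlinarith [sq_nonneg (G y - 1), hG_nonneg y]
    have hD_Ioc : IntegrableOn D (Ioc r b) := by
      refine Integrable.mono' hG_Ioc hD_meas.aestronglyMeasurable ?_
      exact ae_of_all _ fun y => by rw [Real.norm_eq_abs]; exact hDG y
    obtain ⟨M, hM⟩ := (isCompact_Icc (a := r) (b := b)).exists_bound_of_continuousOn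
      (f := fun s => s ^ (N-1) * (2 * u s))
      (((continuous_id.pow (N-1)).mul (continuous_const.mul hu_cont)).continuousOn)
    have hM0 : 0 ≤ M := le_trans (norm_nonneg _) (hM r (left_mem_Icc.2 hrb))
    have hψ₂_Ioc : IntegrableOn ψ₂ (Ioc r b) := by
      refine Integrable.mono' (hG_Ioc.const_mul M)
        (((measurable_id.pow_const (N-1)).mul
          ((measurable_const.mul hu_cont.measurable).mul hD_meas)).aestronglyMeasurable) ?_
      filter_upwards [ae_restrict_mem measurableSet_Ioc] with y hy
      have hyIcc : y ∈ Icc r b := Ioc_subset_Icc_self hy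
      calc ‖ψ₂ y‖ = ‖y ^ (N-1) * (2 * u y)‖ * |D y| := by
            rw [hψ₂]; simp only [Real.norm_eq_abs]; rw [← abs_mul]; ring_nf
        _ ≤ M * G y := by
            refine mul_le_mul (hM y hyIcc) (hDG y) (abs_nonneg _) hM0
    have hψ₁_Ioc : IntegrableOn ψ₁ (Ioc r b) :=
      (((continuous_const.mul (continuous_id.pow (N-2))).mul
        (hu_cont.pow 2)).integrableOn_Ioc)
    have hψInt : IntervalIntegrable (fun s => ψ₁ s + ψ₂ s) volume r b :=
      (intervalIntegrable_iff_integrableOn_Ioc_of_le hrb).2 (hψ₁_Ioc.add hψ₂_Ioc)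
    have hFTC : ∫ s in r..b, (ψ₁ s + ψ₂ s) = b ^ (N-1) * u b ^ 2 - r ^ (N-1) * u r ^ 2 :=
      intervalIntegral.integral_eq_sub_of_hasDerivAt (fun s _ => hφd s) hψInt
    rw [intervalIntegral.integral_of_le hrb,
      integral_add hψ₁_Ioc hψ₂_Ioc] at hFTC
    have hψ₁_nonneg : 0 ≤ ∫ s in Ioc r b, ψ₁ s := by
      refine setIntegral_nonneg measurableSet_Ioc fun y hy => ?_
      have hy0 : (0:ℝ) ≤ y := by linarith [hr0.le.trans hy.1.le]
      rw [hψ₁]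
      positivity
    have habs : -∫ s in Ioc r b, ψ₂ s ≤ ∫ s in Ioc r b, |ψ₂ s| := by
      rw [← integral_neg]
      refine integral_mono_ae hψ₂_Ioc.neg hψ₂_Ioc.abs (ae_of_all _ fun y => ?_)
      exact (neg_le_abs _)
    have hreal : r ^ (N-1) * u r ^ 2 ≤ ε + ∫ s in Ioc r b, |ψ₂ s| := by
      have := hFTC
      nlinarith [hψ₁_nonneg, habs, hφb]
    calc ENNReal.ofReal (r ^ (N-1) * u r ^ 2)
        ≤ ENNReal.ofReal (ε + ∫ s in Ioc r b, |ψ₂ s|) := ENNReal.ofReal_le_ofReal hreal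
      _ ≤ ENNReal.ofReal (∫ s in Ioc r b, |ψ₂ s|) + ENNReal.ofReal ε :=
          le_of_eq (by rw [ENNReal.ofReal_add (by exact_mod_cast hε.le)
            (integral_nonneg fun y => abs_nonneg _), add_comm])
      _ ≤ 2 * P + ε := by
          refine add_le_add ?_ (by simp)
          rw [MeasureTheory.ofReal_integral_eq_lintegral_ofReal hψ₂_Ioc.abs
            (ae_of_all _ fun y => abs_nonneg _)]
          have hstep : ∫⁻ s in Ioc r b, ENNReal.ofReal |ψ₂ s|
              ≤ ∫⁻ s in Ioc r b, ENNReal.ofReal (2 * (s ^ (N-1) * (|u s| * G s))) := by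
            refine lintegral_mono_ae ?_
            filter_upwards [ae_restrict_mem measurableSet_Ioc] with y hy
            refine ENNReal.ofReal_le_ofReal ?_
            have hy0 : (0:ℝ) ≤ y := by linarith [hr0.le.trans hy.1.le]
            have : |ψ₂ y| = y ^ (N-1) * (2 * |u y| * |D y|) := by
              rw [hψ₂, abs_mul, abs_mul, abs_mul, abs_of_nonneg (pow_nonneg hy0 _)]
              norm_num
            rw [this]
            have := hDG y
            nlinarith [abs_nonneg (u y), pow_nonneg hy0 (N-1), abs_nonneg (D y),
              mul_nonneg (pow_nonneg hy0 (N-1)) (abs_nonneg (u y))]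
          refine le_trans hstep ?_
          have hstep2 : ∫⁻ s in Ioc r b, ENNReal.ofReal (2 * (s ^ (N-1) * (|u s| * G s)))
              ≤ ∫⁻ s in Ioi 1, ENNReal.ofReal (2 * (s ^ (N-1) * (|u s| * G s))) :=
            lintegral_mono_set hsub
          refine le_trans hstep2 (le_of_eq ?_)
          rw [hP, ← lintegral_const_mul' _ _ (by norm_num : (2:ℝ≥0∞) ≠ ∞)]
          refine lintegral_congr_ae ?_
          filter_upwards [ae_restrict_mem measurableSet_Ioi] with y hy
          rw [ENNReal.ofReal_mul (by norm_num), ENNReal.ofReal_ofNat]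
  -- convert to real
  have hr0 : (0:ℝ) < r := lt_of_lt_of_le one_pos hr1
  have hAR : A.toReal ≤ (∫ y, f y ^ 2) / cR := by
    have h := ENNReal.toReal_mono ENNReal.ofReal_ne_top hAle
    rw [ENNReal.toReal_mul, ENNReal.toReal_ofReal hI1nn] at h
    rw [le_div_iff₀ hcR0]
    calc A.toReal * cR = c.toReal * A.toReal := by rw [hcR]; ring
      _ ≤ _ := h
  have hBR : B.toReal ≤ (∫ y, ‖fderiv ℝ f y‖ ^ 2) / cR := by
    have h := ENNReal.toReal_mono ENNReal.ofReal_ne_top hBle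
    rw [ENNReal.toReal_mul, ENNReal.toReal_ofReal hI2nn] at h
    rw [le_div_iff₀ hcR0]
    calc B.toReal * cR = c.toReal * B.toReal := by rw [hcR]; ring
      _ ≤ _ := h
  have hfinal : r ^ (N - 1) * u r ^ 2 ≤ 2 / cR * Real.sqrt (∫ y, f y ^ 2) *
      Real.sqrt (∫ y, ‖fderiv ℝ f y‖ ^ 2) := by
    have h1 : ENNReal.ofReal (r ^ (N-1) * u r ^ 2) ≤ 2 * (A ^ (1/2:ℝ) * B ^ (1/2:ℝ)) :=
      hmain.trans (mul_le_mul_right hCS 2)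
    have hne : 2 * (A ^ (1/2:ℝ) * B ^ (1/2:ℝ)) ≠ ⊤ := by
      refine ENNReal.mul_ne_top (by norm_num) (ENNReal.mul_ne_top ?_ ?_)
      · exact (ENNReal.rpow_lt_top_of_nonneg (by norm_num) hAtop).ne
      · exact (ENNReal.rpow_lt_top_of_nonneg (by norm_num) hBtop).ne
    have h2 := ENNReal.toReal_mono hne h1
    rw [ENNReal.toReal_ofReal (by positivity)] at h2
    rw [ENNReal.toReal_mul, ENNReal.toReal_mul, ENNReal.toReal_ofNat,
      ← ENNReal.toReal_rpow, ← ENNReal.toReal_rpow] at h2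
    refine h2.trans ?_
    have hstep : A.toReal ^ (1/2:ℝ) * B.toReal ^ (1/2:ℝ)
        ≤ ((∫ y, f y ^ 2) / cR) ^ (1/2:ℝ) * ((∫ y, ‖fderiv ℝ f y‖ ^ 2) / cR) ^ (1/2:ℝ) := by
      refine mul_le_mul (Real.rpow_le_rpow ENNReal.toReal_nonneg hAR (by norm_num))
        (Real.rpow_le_rpow ENNReal.toReal_nonneg hBR (by norm_num))
        (Real.rpow_nonneg ENNReal.toReal_nonneg _) (Real.rpow_nonneg (by positivity) _)
    calc 2 * (A.toReal ^ (1/2:ℝ) * B.toReal ^ (1/2:ℝ))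
        ≤ 2 * (((∫ y, f y ^ 2) / cR) ^ (1/2:ℝ) * ((∫ y, ‖fderiv ℝ f y‖ ^ 2) / cR) ^ (1/2:ℝ)) :=
          by linarith [hstep]
      _ = 2 / cR * Real.sqrt (∫ y, f y ^ 2) * Real.sqrt (∫ y, ‖fderiv ℝ f y‖ ^ 2) := by
          rw [← Real.sqrt_eq_rpow, ← Real.sqrt_eq_rpow,
            Real.sqrt_div hI1nn, Real.sqrt_div hI2nn]
          have hs : Real.sqrt cR * Real.sqrt cR = cR := Real.mul_self_sqrt hcR0.le
          rw [div_mul_div_comm, hs]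
          ring
  -- conclude
  rw [hfu x, ← hr]
  have hu2 : u r ^ 2 ≤ (2 / cR * Real.sqrt (∫ y, f y ^ 2) *
      Real.sqrt (∫ y, ‖fderiv ℝ f y‖ ^ 2)) / r ^ (N-1) := by
    rw [le_div_iff₀ (pow_pos hr0 _)]
    calc u r ^ 2 * r ^ (N-1) = r ^ (N-1) * u r ^ 2 := by ring
      _ ≤ _ := hfinal
  have habs : |u r| = Real.sqrt (u r ^ 2) := (Real.sqrt_sq_eq_abs _).symm
  rw [habs]
  refine (Real.sqrt_le_sqrt hu2).trans (le_of_eq ?_)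
  have hrpow : (r : ℝ) ^ (N-1 : ℕ) = r ^ ((N:ℝ) - 1) := by
    rw [← Real.rpow_natCast r (N-1), Nat.cast_sub (by omega), Nat.cast_one]
  have hsq14 : ∀ t : ℝ, 0 ≤ t → Real.sqrt (Real.sqrt t) = t ^ ((1:ℝ)/4) := by
    intro t ht
    rw [Real.sqrt_eq_rpow, Real.sqrt_eq_rpow, ← Real.rpow_mul ht]
    norm_num
  rw [Real.sqrt_div (by positivity), hrpow]
  rw [Real.sqrt_mul (by positivity), Real.sqrt_mul (by positivity)]
  rw [hsq14 _ hI1nn, hsq14 _ hI2nn]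
  have hsr : Real.sqrt (r ^ ((N:ℝ)-1)) = r ^ (((N:ℝ)-1)/2) := by
    rw [Real.sqrt_eq_rpow, ← Real.rpow_mul hr0.le]
    congr 1
    ring
  rw [hsr, div_eq_mul_inv, ← Real.rpow_neg hr0.le]
  ring
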